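/- For any log-scale ℓ on a set X there exists a metric d on X and constants 0 < α < 1, c > 1 such that c⁻¹·α^{ℓ(x,y)} ≤ d(x,y) ≤ c·α^{ℓ(x,y)} for all x ≠ y. -/

import Mathlib

/-- A log-scale on a set `X`: a symmetric function with values in `ℝ ∪ {∞}`
(modeled as `EReal`, never taking the value `⊥`), equal to `∞` exactly on the
diagonal, and satisfying the quasi-ultrametric inequality
`ℓ x z ≥ min (ℓ x y) (ℓ y z) - δ` for some constant `δ ≥ 0`. -/
structure LogScale (X : Type*) where
  ℓ : X → X → EReal
  symm : ∀ x y, ℓ x y = ℓ y x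
  ne_bot : ∀ x y, ℓ x y ≠ ⊥
  top_iff : ∀ x y, ℓ x y = ⊤ ↔ x = y
  δ : ℝ
  δ_nonneg : 0 ≤ δ
  quasi : ∀ x y z, ℓ x z ≥ min (ℓ x y) (ℓ y z) - (δ : EReal)

/-- For any log-scale `ℓ` on a set `X` there exists a metric `d` on `X` and
constants `0 < α < 1`, `c > 1` such that
`c⁻¹ · α ^ (ℓ x y) ≤ d x y ≤ c · α ^ (ℓ x y)` for all `x ≠ y`. -/
private lemma frink_chain {X : Type*} (ρ : X → X → ℝ)
    (h0 : ∀ x y, 0 ≤ ρ x y) (hrefl : ∀ x, ρ x x = 0)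
    (hq : ∀ x y z, ρ x z ≤ Real.sqrt 2 * max (ρ x y) (ρ y z)) :
    ∀ (n : ℕ) (f : ℕ → X), ρ (f 0) (f n) ≤ 2 * ∑ i ∈ Finset.range n, ρ (f i) (f (i + 1)) := by
  intro n
  induction n using Nat.strong_induction_on with
  | _ n ih =>
    intro f
    rcases Nat.eq_zero_or_pos n with hn | hn
    · subst hn; simp [hrefl]
    classical
    set S := ∑ i ∈ Finset.range n, ρ (f i) (f (i + 1)) with hSdef
    have hS0 : 0 ≤ S := Finset.sum_nonneg fun i _ => h0 _ _
    set P : ℕ → Prop := fun m => ∑ i ∈ Finset.range m, ρ (f i) (f (i+1)) ≤ S / 2 with hP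
    have hP0 : P 0 := by simp [hP]; linarith
    set k := Nat.findGreatest P (n - 1) with hk
    have hkle : k ≤ n - 1 := Nat.findGreatest_le _
    have hPk : P k := Nat.findGreatest_spec (Nat.zero_le _) hP0
    have hFk : ∑ i ∈ Finset.range k, ρ (f i) (f (i+1)) ≤ S / 2 := hPk
    have hkn : k < n := lt_of_le_of_lt hkle (by omega)
    have hpre : ρ (f 0) (f k) ≤ S := by
      have := ih k hkn f
      linarith
    have hedge : ρ (f k) (f (k+1)) ≤ S := by
      exact Finset.single_le_sum (f := fun i => ρ (f i) (f (i+1)))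
        (fun i _ => h0 _ _) (Finset.mem_range.mpr hkn)
    have hsuf : ρ (f (k+1)) (f n) ≤ S := by
      rcases eq_or_lt_of_le hkle with he | hlt
      · have hkeq : k + 1 = n := by omega
        rw [hkeq, hrefl]; exact hS0
      · have hnot : ¬ P (k+1) := Nat.findGreatest_is_greatest (n := n - 1) (k := k + 1)
          (show Nat.findGreatest P (n - 1) < k + 1 by omega) (by omega)
        have hgt : S / 2 < ∑ i ∈ Finset.range (k+1), ρ (f i) (f (i+1)) := lt_of_not_ge hnot
        have hsplit : ∑ i ∈ Finset.range (k+1), ρ (f i) (f (i+1))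
            + ∑ i ∈ Finset.Ico (k+1) n, ρ (f i) (f (i+1)) = S := by
          have h01 : ∑ i ∈ Finset.range (k+1), ρ (f i) (f (i+1))
              = ∑ i ∈ Finset.Ico 0 (k+1), ρ (f i) (f (i+1)) := by
            rw [Finset.range_eq_Ico]
          have h02 : S = ∑ i ∈ Finset.Ico 0 n, ρ (f i) (f (i+1)) := by
            rw [hSdef, Finset.range_eq_Ico]
          rw [h01, h02]
          exact Finset.sum_Ico_consecutive _ (Nat.zero_le _) (by omega)
        have hico : ∑ i ∈ Finset.Ico (k+1) n, ρ (f i) (f (i+1))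
            = ∑ i ∈ Finset.range (n - (k+1)), ρ (f (k+1+i)) (f (k+1+i+1)) := by
          rw [Finset.sum_Ico_eq_sum_range]
        have hm : n - (k+1) < n := by omega
        have hih := ih (n - (k+1)) hm (fun i => f (k+1+i))
        have hend : k+1+(n-(k+1)) = n := by omega
        rw [hend] at hih
        have hih2 : ρ (f (k+1)) (f n) ≤ 2 * ∑ i ∈ Finset.Ico (k+1) n, ρ (f i) (f (i+1)) := by
          rw [Finset.sum_Ico_eq_sum_range]
          simpa [Nat.add_assoc] using hih
        linarith
    have hs2 : (1:ℝ) ≤ Real.sqrt 2 := by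
      rw [show (1:ℝ) = Real.sqrt 1 from (Real.sqrt_one).symm]
      exact Real.sqrt_le_sqrt (by norm_num)
    have hs2nn : (0:ℝ) ≤ Real.sqrt 2 := by linarith
    have hsq : Real.sqrt 2 * Real.sqrt 2 = 2 := Real.mul_self_sqrt (by norm_num)
    have h2 : ρ (f 0) (f (k+1)) ≤ Real.sqrt 2 * S := by
      have := hq (f 0) (f k) (f (k+1))
      have hmax : max (ρ (f 0) (f k)) (ρ (f k) (f (k+1))) ≤ S := max_le hpre hedge
      nlinarith
    have h1 : ρ (f 0) (f n) ≤ Real.sqrt 2 * max (ρ (f 0) (f (k+1))) (ρ (f (k+1)) (f n)) :=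
      hq (f 0) (f (k+1)) (f n)
    have hmax2 : max (ρ (f 0) (f (k+1))) (ρ (f (k+1)) (f n)) ≤ Real.sqrt 2 * S := by
      apply max_le h2
      nlinarith
    nlinarith

theorem logScale_exists_associated_metric {X : Type*} (L : LogScale X) :
    ∃ (d : X → X → ℝ) (α c : ℝ),
      (∀ x, d x x = 0) ∧
      (∀ x y, d x y = d y x) ∧
      (∀ x y, x ≠ y → 0 < d x y) ∧
      (∀ x y z, d x z ≤ d x y + d y z) ∧
      0 < α ∧ α < 1 ∧ 1 < c ∧
      ∀ x y, x ≠ y →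
        c⁻¹ * α ^ ((L.ℓ x y).toReal) ≤ d x y ∧
        d x y ≤ c * α ^ ((L.ℓ x y).toReal) := by
  classical
  set e : ℝ := -(2 * (L.δ + 1))⁻¹ with he
  set α : ℝ := (2:ℝ) ^ e with hα
  have hδ := L.δ_nonneg
  have hepos : 0 < (2 * (L.δ + 1))⁻¹ := by positivity
  have hα0 : 0 < α := Real.rpow_pos_of_pos (by norm_num) _
  have hα1 : α < 1 := Real.rpow_lt_one_of_one_lt_of_neg (by norm_num) (by rw [he]; linarith)
  have hs2 : (1:ℝ) ≤ Real.sqrt 2 := by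
    rw [show (1:ℝ) = Real.sqrt 1 from (Real.sqrt_one).symm]
    exact Real.sqrt_le_sqrt (by norm_num)
  have hs2nn : (0:ℝ) ≤ Real.sqrt 2 := by linarith
  set ρ : X → X → ℝ := fun x y => if x = y then 0 else α ^ (L.ℓ x y).toReal with hρ
  have hρval : ∀ x y, x ≠ y → ρ x y = α ^ (L.ℓ x y).toReal := by
    intro x y h; rw [hρ]; dsimp only; rw [if_neg h]
  have hρrefl : ∀ x, ρ x x = 0 := by intro x; simp [hρ]
  have hρpos : ∀ x y, x ≠ y → 0 < ρ x y := by
    intro x y h; rw [hρval x y h]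
    exact Real.rpow_pos_of_pos hα0 _
  have hρ0 : ∀ x y, 0 ≤ ρ x y := by
    intro x y
    by_cases h : x = y
    · subst h; rw [hρrefl]
    · exact le_of_lt (hρpos x y h)
  have hρsymm : ∀ x y, ρ x y = ρ y x := by
    intro x y
    by_cases h : x = y
    · subst h; rfl
    · rw [hρval x y h, hρval y x (Ne.symm h), L.symm]
  -- the quasi-ultrametric constant is at most √2
  have hK : α ^ (-L.δ) ≤ Real.sqrt 2 := by
    have hexp : e * -L.δ ≤ 1 / 2 := by
      rw [he]
      have h1 : -(2 * (L.δ + 1))⁻¹ * -L.δ = L.δ / (2 * (L.δ + 1)) := by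
        field_simp
      rw [h1, div_le_iff₀ (by linarith : (0:ℝ) < 2 * (L.δ + 1))]
      linarith
    have h2 : α ^ (-L.δ) = (2:ℝ) ^ (e * -L.δ) := by
      rw [hα, ← Real.rpow_mul (by norm_num : (0:ℝ) ≤ 2)]
    rw [h2, Real.sqrt_eq_rpow]
    exact Real.rpow_le_rpow_of_exponent_le (by norm_num) hexp
  -- finiteness of ℓ off the diagonal
  have hfin : ∀ u v : X, u ≠ v → L.ℓ u v = ((L.ℓ u v).toReal : EReal) := by
    intro u v h
    exact (EReal.coe_toReal (fun ht => h ((L.top_iff u v).mp ht)) (L.ne_bot u v)).symm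
  -- quasi-ultrametric inequality for ρ
  have hq : ∀ x y z, ρ x z ≤ Real.sqrt 2 * max (ρ x y) (ρ y z) := by
    intro x y z
    have hmax0 : 0 ≤ max (ρ x y) (ρ y z) := le_max_of_le_left (hρ0 x y)
    by_cases hxz : x = z
    · have : ρ x z = 0 := by subst hxz; exact hρrefl x
      rw [this]; positivity
    by_cases hxy : x = y
    · have h1 : ρ y z = ρ x z := by rw [hxy]
      calc ρ x z ≤ Real.sqrt 2 * ρ x z := by nlinarith [hρ0 x z]
        _ = Real.sqrt 2 * ρ y z := by rw [h1]
        _ ≤ Real.sqrt 2 * max (ρ x y) (ρ y z) := by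
            nlinarith [le_max_right (ρ x y) (ρ y z)]
    by_cases hyz : y = z
    · have h1 : ρ x y = ρ x z := by rw [hyz]
      calc ρ x z ≤ Real.sqrt 2 * ρ x z := by nlinarith [hρ0 x z]
        _ = Real.sqrt 2 * ρ x y := by rw [h1]
        _ ≤ Real.sqrt 2 * max (ρ x y) (ρ y z) := by
            nlinarith [le_max_left (ρ x y) (ρ y z)]
    -- all three points distinct
    have hquasi := L.quasi x y z
    rw [hfin x y hxy, hfin y z hyz, hfin x z hxz] at hquasi
    set a := (L.ℓ x y).toReal with ha
    set b := (L.ℓ y z).toReal with hb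
    set c := (L.ℓ x z).toReal with hc
    have hreal : min a b - L.δ ≤ c := by
      have hmin : ((min a b : ℝ) : EReal) = min (a : EReal) (b : EReal) := by
        rcases le_total a b with h | h
        · rw [min_eq_left h, min_eq_left (EReal.coe_le_coe_iff.mpr h)]
        · rw [min_eq_right h, min_eq_right (EReal.coe_le_coe_iff.mpr h)]
      have h1 : ((min a b - L.δ : ℝ) : EReal) ≤ (c : EReal) := by
        rw [EReal.coe_sub, hmin]
        exact hquasi
      exact EReal.coe_le_coe_iff.mp h1
    have h1 : ρ x z = α ^ c := hρval x z hxz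
    have hmono : α ^ c ≤ α ^ (min a b - L.δ) :=
      Real.rpow_le_rpow_of_exponent_ge hα0 (le_of_lt hα1) hreal
    have hsplit : α ^ (min a b - L.δ) = α ^ (-L.δ) * α ^ (min a b) := by
      rw [← Real.rpow_add hα0]; ring_nf
    have hminmax : α ^ (min a b) ≤ max (ρ x y) (ρ y z) := by
      rcases le_total a b with h | h
      · rw [min_eq_left h, ← hρval x y hxy]
        exact le_max_left _ _
      · rw [min_eq_right h, ← hρval y z hyz]
        exact le_max_right _ _
    have hαmin0 : 0 ≤ α ^ (min a b) := le_of_lt (Real.rpow_pos_of_pos hα0 _)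
    have hK0 : 0 ≤ α ^ (-L.δ) := le_of_lt (Real.rpow_pos_of_pos hα0 _)
    calc ρ x z = α ^ c := h1
      _ ≤ α ^ (-L.δ) * α ^ (min a b) := by rw [← hsplit]; exact hmono
      _ ≤ Real.sqrt 2 * max (ρ x y) (ρ y z) :=
          mul_le_mul hK hminmax hαmin0 hs2nn
  -- chain sets
  set A : X → X → Set ℝ := fun x y =>
    {s | ∃ n : ℕ, ∃ f : ℕ → X, f 0 = x ∧ f n = y ∧
      s = ∑ i ∈ Finset.range n, ρ (f i) (f (i + 1))} with hA
  have hmem : ∀ x y, ρ x y ∈ A x y := by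
    intro x y
    refine ⟨1, fun i => if i = 0 then x else y, by simp, by simp, by simp⟩
  have hlb : ∀ x y, ∀ s ∈ A x y, ρ x y / 2 ≤ s := by
    rintro x y s ⟨n, f, h0', hn', rfl⟩
    have := frink_chain ρ hρ0 hρrefl hq n f
    rw [h0', hn'] at this
    linarith
  have hbdd : ∀ x y, BddBelow (A x y) := fun x y => ⟨ρ x y / 2, hlb x y⟩
  have hne : ∀ x y, (A x y).Nonempty := fun x y => ⟨ρ x y, hmem x y⟩
  set d : X → X → ℝ := fun x y => sInf (A x y) with hd
  have hdle : ∀ x y, d x y ≤ ρ x y := fun x y => csInf_le (hbdd x y) (hmem x y)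
  have hdge : ∀ x y, ρ x y / 2 ≤ d x y := fun x y => le_csInf (hne x y) (hlb x y)
  -- symmetry of chain sets
  have hAsub : ∀ x y, A x y ⊆ A y x := by
    rintro x y s ⟨n, f, h0', hn', rfl⟩
    refine ⟨n, fun i => f (n - i), by simpa using hn', by simpa using h0', ?_⟩
    have hrefl2 := Finset.sum_range_reflect
      (fun j => ρ (f (n - j)) (f (n - (j + 1)))) n
    rw [← hrefl2]
    apply Finset.sum_congr rfl
    intro j hj
    rw [Finset.mem_range] at hj
    have e1 : n - (n - 1 - j) = j + 1 := by omega
    have e2 : n - (n - 1 - j + 1) = j := by omega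
    rw [e1, e2, hρsymm]
  -- concatenation of chains
  have hconcat : ∀ x y z, ∀ s ∈ A x y, ∀ t ∈ A y z, s + t ∈ A x z := by
    rintro x y z s ⟨n, f, hf0, hfn, rfl⟩ t ⟨m, g, hg0, hgm, rfl⟩
    refine ⟨n + m, fun i => if i ≤ n then f i else g (i - n), ?_, ?_, ?_⟩
    · simp [hf0]
    · by_cases hm : m = 0
      · subst hm
        dsimp only
        rw [if_pos (by omega : n + 0 ≤ n), show n + 0 = n from rfl, hfn, ← hg0]
        exact hgm
      · have hnot : ¬ (n + m ≤ n) := by omega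
        dsimp only
        rw [if_neg hnot]
        have hmm : n + m - n = m := by omega
        rw [hmm, hgm]
    · have hsplit : ∑ i ∈ Finset.range (n + m),
          ρ ((fun i => if i ≤ n then f i else g (i - n)) i)
            ((fun i => if i ≤ n then f i else g (i - n)) (i + 1))
          = ∑ i ∈ Finset.Ico 0 n,
          ρ ((fun i => if i ≤ n then f i else g (i - n)) i)
            ((fun i => if i ≤ n then f i else g (i - n)) (i + 1))
          + ∑ i ∈ Finset.Ico n (n + m),
          ρ ((fun i => if i ≤ n then f i else g (i - n)) i)
            ((fun i => if i ≤ n then f i else g (i - n)) (i + 1)) := by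
        rw [Finset.range_eq_Ico,
          Finset.sum_Ico_consecutive _ (Nat.zero_le n) (Nat.le_add_right n m)]
      rw [hsplit]
      congr 1
      · rw [← Finset.range_eq_Ico]
        apply Finset.sum_congr rfl
        intro i hi
        rw [Finset.mem_range] at hi
        dsimp only
        rw [if_pos (by omega : i ≤ n), if_pos (by omega : i + 1 ≤ n)]
      · rw [Finset.sum_Ico_eq_sum_range]
        have hmm : n + m - n = m := by omega
        rw [hmm]
        apply Finset.sum_congr rfl
        intro i hi
        rw [Finset.mem_range] at hi
        dsimp only
        have h2 : ¬ (n + i + 1 ≤ n) := by omega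
        rw [if_neg h2]
        have e2 : n + i + 1 - n = i + 1 := by omega
        rw [e2]
        by_cases hi0 : i = 0
        · subst hi0
          rw [if_pos (by omega : n + 0 ≤ n)]
          have : n + 0 = n := by omega
          rw [this, hfn, ← hg0]
        · have h1 : ¬ (n + i ≤ n) := by omega
          rw [if_neg h1]
          have e1 : n + i - n = i := by omega
          rw [e1]
  -- triangle inequality
  have htri : ∀ x y z, d x z ≤ d x y + d y z := by
    intro x y z
    have h2 : ∀ t ∈ A y z, d x z - t ≤ d x y := by
      intro t ht
      apply le_csInf (hne x y)
      intro s hs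
      have := csInf_le (hbdd x z) (hconcat x y z s hs t ht)
      linarith
    have h3 : ∀ t ∈ A y z, d x z - d x y ≤ t := by
      intro t ht
      linarith [h2 t ht]
    linarith [le_csInf (hne y z) h3]
  have hdsymm : ∀ x y, d x y = d y x := by
    intro x y
    rw [hd]; dsimp only
    rw [Set.Subset.antisymm (hAsub x y) (hAsub y x)]
  refine ⟨d, α, 2, ?_, hdsymm, ?_, htri, hα0, hα1, by norm_num, ?_⟩
  · intro x
    have h1 := hdle x x
    have h2 := hdge x x
    rw [hρrefl] at h1 h2
    linarith
  · intro x y hxy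
    have := hdge x y
    have := hρpos x y hxy
    linarith
  · intro x y hxy
    have h1 := hdge x y
    have h2 := hdle x y
    rw [hρval x y hxy] at h1 h2
    constructor
    · calc (2:ℝ)⁻¹ * α ^ (L.ℓ x y).toReal = α ^ (L.ℓ x y).toReal / 2 := by ring
        _ ≤ d x y := h1
    · have h0 : 0 ≤ α ^ (L.ℓ x y).toReal := le_of_lt (Real.rpow_pos_of_pos hα0 _)
      linarith
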